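/- Let d ≥ 1, let α ∈ [0, 1/2) and ε ∈ (0, 1). Let C̃X̃ and X* be finite nonempty subsets of ℝ^d, let T = X̃ ∩ X*, and assume |T| ≥ (1 − α)·max(|X̃|, |X*|). Let m ∈ ℝ^d be a geometric median of T and let c* ∈ ℝ^d be a geometric median of X*. Let C be a finite nonempty set of points of ℝ^d containing some point q with ‖q − m‖₂ ≤ α·ε·Cost(T, m)/|T|. For each c ∈ C let N(c) ⊆ X̃ be a set of ⌈(1 − α)|X̃|⌉ points of X̃ closest to c, and let ĉ ∈ C minimize Cost(N(c), c) over c ∈ C. Then ‖ĉ − c*‖₂ ≤ (2 + αε)·Cost(X*, c*) / ((1 − 2α)·|X̃|). -/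

import Mathlib

open Finset
open scoped Classical

noncomputable def Cost {d : ℕ} (P : Finset (EuclideanSpace ℝ (Fin d)))
    (c : EuclideanSpace ℝ (Fin d)) : ℝ :=
  ∑ p ∈ P, ‖p - c‖

lemma sum_le_sum_card_eq {β : Type*} (f : β → ℝ) (hf : ∀ x, 0 ≤ f x)
    (A B : Finset β) (h : A.card = B.card)
    (hle : ∀ a ∈ A, ∀ b ∈ B, f a ≤ f b) :
    ∑ a ∈ A, f a ≤ ∑ b ∈ B, f b := by
  rcases A.eq_empty_or_nonempty with rfl | hA
  · exact Finset.sum_nonneg fun b _ => hf b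
  · have hB : 0 < (B.card : ℝ) := by
      have : B.Nonempty := Finset.card_pos.mp (h ▸ Finset.card_pos.mpr hA)
      exact_mod_cast Finset.card_pos.mpr this
    have key : ∀ a ∈ A, f a ≤ (∑ b ∈ B, f b) / (B.card : ℝ) := by
      intro a ha
      rw [le_div_iff₀ hB]
      calc f a * (B.card : ℝ) = ∑ _b ∈ B, f a := by
            rw [Finset.sum_const, nsmul_eq_mul, mul_comm]
        _ ≤ ∑ b ∈ B, f b := Finset.sum_le_sum fun b hb => hle a ha b hb
    calc ∑ a ∈ A, f a ≤ ∑ _a ∈ A, (∑ b ∈ B, f b) / (B.card : ℝ) :=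
          Finset.sum_le_sum key
      _ = (A.card : ℝ) * ((∑ b ∈ B, f b) / (B.card : ℝ)) := by
          rw [Finset.sum_const, nsmul_eq_mul]
      _ = ∑ b ∈ B, f b := by rw [h]; field_simp

set_option maxHeartbeats 800000 in
theorem stmt2 (d : ℕ) (hd : 1 ≤ d) (α ε : ℝ)
    (hα0 : 0 ≤ α) (hα : α < 1/2) (hε0 : 0 < ε) (hε1 : ε < 1)
    (Xt Xs : Finset (EuclideanSpace ℝ (Fin d)))
    (hXt : Xt.Nonempty) (hXs : Xs.Nonempty)
    (T : Finset (EuclideanSpace ℝ (Fin d))) (hTdef : T = Xt ∩ Xs)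
    (hTsize : (1 - α) * max (Xt.card : ℝ) (Xs.card : ℝ) ≤ (T.card : ℝ))
    (m cstar : EuclideanSpace ℝ (Fin d))
    (hm : ∀ y, Cost T m ≤ Cost T y)
    (hcstar : ∀ y, Cost Xs cstar ≤ Cost Xs y)
    (C : Finset (EuclideanSpace ℝ (Fin d))) (hC : C.Nonempty)
    (q : EuclideanSpace ℝ (Fin d)) (hqC : q ∈ C)
    (hq : ‖q - m‖ ≤ α * ε * Cost T m / (T.card : ℝ))
    (N : EuclideanSpace ℝ (Fin d) → Finset (EuclideanSpace ℝ (Fin d)))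
    (hNsub : ∀ c ∈ C, N c ⊆ Xt)
    (hNcard : ∀ c ∈ C, (N c).card = ⌈(1 - α) * (Xt.card : ℝ)⌉₊)
    (hNnear : ∀ c ∈ C, ∀ x ∈ N c, ∀ y ∈ Xt \ N c, ‖x - c‖ ≤ ‖y - c‖)
    (chat : EuclideanSpace ℝ (Fin d)) (hchatC : chat ∈ C)
    (hchat : ∀ c ∈ C, Cost (N chat) chat ≤ Cost (N c) c) :
    ‖chat - cstar‖ ≤ (2 + α * ε) * Cost Xs cstar / ((1 - 2 * α) * (Xt.card : ℝ)) := by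
  have hTXt : T ⊆ Xt := hTdef ▸ Finset.inter_subset_left
  have hTXs : T ⊆ Xs := hTdef ▸ Finset.inter_subset_right
  have hXtpos : 0 < (Xt.card : ℝ) := by exact_mod_cast Finset.card_pos.mpr hXt
  have hT1 : (1 - α) * (Xt.card : ℝ) ≤ (T.card : ℝ) :=
    le_trans (by nlinarith [le_max_left (Xt.card : ℝ) (Xs.card : ℝ)]) hTsize
  have hTpos : 0 < (T.card : ℝ) := by nlinarith
  set k := ⌈(1 - α) * (Xt.card : ℝ)⌉₊ with hk
  have hkT : k ≤ T.card := Nat.ceil_le.mpr (by exact_mod_cast hT1)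
  -- choose S' ⊆ T with card k
  obtain ⟨S', hS'T, hS'card⟩ := Finset.exists_subset_card_eq hkT
  -- basic nonneg facts
  have costnn : ∀ (P : Finset (EuclideanSpace ℝ (Fin d))) c, 0 ≤ Cost P c := by
    intro P c; exact Finset.sum_nonneg fun p _ => norm_nonneg _
  -- Cost (N q) q ≤ Cost S' q
  have hNq : Cost (N q) q ≤ Cost S' q := by
    have hsplit1 : ∑ p ∈ N q ∩ S', ‖p - q‖ + ∑ p ∈ N q \ S', ‖p - q‖ = Cost (N q) q :=
      Finset.sum_inter_add_sum_sdiff _ _ _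
    have hsplit2 : ∑ p ∈ S' ∩ N q, ‖p - q‖ + ∑ p ∈ S' \ N q, ‖p - q‖ = Cost S' q :=
      Finset.sum_inter_add_sum_sdiff _ _ _
    have hcardeq : (N q \ S').card = (S' \ N q).card := by
      apply Finset.card_sdiff_comm
      rw [hNcard q hqC, hS'card]
    have hdiffle : ∑ p ∈ N q \ S', ‖p - q‖ ≤ ∑ p ∈ S' \ N q, ‖p - q‖ := by
      apply sum_le_sum_card_eq _ (fun x => norm_nonneg _) _ _ hcardeq
      intro a ha b hb
      refine hNnear q hqC a (Finset.mem_sdiff.mp ha).1 b ?_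
      rcases Finset.mem_sdiff.mp hb with ⟨hb1, hb2⟩
      exact Finset.mem_sdiff.mpr ⟨hTXt (hS'T hb1), hb2⟩
    have hic : N q ∩ S' = S' ∩ N q := Finset.inter_comm _ _
    rw [← hsplit1, ← hsplit2, hic]
    linarith
  -- Cost S' q ≤ Cost T q
  have hS'T' : Cost S' q ≤ Cost T q :=
    Finset.sum_le_sum_of_subset_of_nonneg hS'T (fun p _ _ => norm_nonneg _)
  -- Cost T q ≤ Cost T m + T.card * ‖q - m‖
  have hTq : Cost T q ≤ Cost T m + (T.card : ℝ) * ‖q - m‖ := by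
    have : ∀ p ∈ T, ‖p - q‖ ≤ ‖p - m‖ + ‖q - m‖ := by
      intro p _
      have h1 : p - q = (p - m) - (q - m) := by abel
      rw [h1]
      exact norm_sub_le _ _
    calc Cost T q ≤ ∑ p ∈ T, (‖p - m‖ + ‖q - m‖) := Finset.sum_le_sum this
      _ = Cost T m + (T.card : ℝ) * ‖q - m‖ := by
          rw [Finset.sum_add_distrib, Finset.sum_const, nsmul_eq_mul]; rfl
  have hqm : (T.card : ℝ) * ‖q - m‖ ≤ α * ε * Cost T m := by
    have := mul_le_mul_of_nonneg_left hq (le_of_lt hTpos)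
    rwa [mul_div_cancel₀ _ (ne_of_gt hTpos)] at this
  -- Cost T m ≤ Cost Xs cstar
  have hTm : Cost T m ≤ Cost Xs cstar := by
    calc Cost T m ≤ Cost T cstar := hm cstar
      _ ≤ Cost Xs cstar :=
        Finset.sum_le_sum_of_subset_of_nonneg hTXs (fun p _ _ => norm_nonneg _)
  have hTm0 : 0 ≤ Cost T m := costnn T m
  -- upper bound on Cost (N chat) chat
  have hupper : Cost (N chat) chat ≤ (1 + α * ε) * Cost Xs cstar := by
    have h1 : Cost (N chat) chat ≤ Cost (N q) q := hchat q hqC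
    have h2 : α * ε * Cost T m ≤ α * ε * Cost Xs cstar :=
      mul_le_mul_of_nonneg_left hTm (mul_nonneg hα0 hε0.le)
    linarith
  -- S = N chat ∩ T
  set S := N chat ∩ T with hS
  have hScard : (1 - 2 * α) * (Xt.card : ℝ) ≤ (S.card : ℝ) := by
    have hk1 : (1 - α) * (Xt.card : ℝ) ≤ ((N chat).card : ℝ) := by
      rw [hNcard chat hchatC]; exact Nat.le_ceil _
    have hunion : (N chat ∪ T).card ≤ Xt.card :=
      Finset.card_le_card (Finset.union_subset (hNsub chat hchatC) hTXt)
    have hie : (N chat ∪ T).card + (N chat ∩ T).card = (N chat).card + T.card :=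
      Finset.card_union_add_card_inter _ _
    have hie' : ((N chat ∪ T).card : ℝ) + (S.card : ℝ)
        = ((N chat).card : ℝ) + (T.card : ℝ) := by exact_mod_cast hie
    have hunion' : ((N chat ∪ T).card : ℝ) ≤ (Xt.card : ℝ) := by exact_mod_cast hunion
    nlinarith
  have hSpos : 0 < (S.card : ℝ) := by nlinarith
  -- lower bound: S.card * ‖chat - cstar‖ ≤ Cost S chat + Cost S cstar
  have hlower : (S.card : ℝ) * ‖chat - cstar‖ ≤ Cost S chat + Cost S cstar := by
    have : ∀ p ∈ S, ‖chat - cstar‖ ≤ ‖p - chat‖ + ‖p - cstar‖ := by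
      intro p _
      have h1 : chat - cstar = (p - cstar) - (p - chat) := by abel
      rw [h1]
      calc ‖(p - cstar) - (p - chat)‖ ≤ ‖p - cstar‖ + ‖p - chat‖ := norm_sub_le _ _
        _ = ‖p - chat‖ + ‖p - cstar‖ := by ring
    calc (S.card : ℝ) * ‖chat - cstar‖ = ∑ _p ∈ S, ‖chat - cstar‖ := by
          rw [Finset.sum_const, nsmul_eq_mul]
      _ ≤ ∑ p ∈ S, (‖p - chat‖ + ‖p - cstar‖) := Finset.sum_le_sum this
      _ = Cost S chat + Cost S cstar := by
          rw [Finset.sum_add_distrib]; rfl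
  have hSN : Cost S chat ≤ Cost (N chat) chat :=
    Finset.sum_le_sum_of_subset_of_nonneg (hS ▸ Finset.inter_subset_left)
      (fun p _ _ => norm_nonneg _)
  have hSXs : Cost S cstar ≤ Cost Xs cstar :=
    Finset.sum_le_sum_of_subset_of_nonneg
      (le_trans (hS ▸ Finset.inter_subset_right) hTXs)
      (fun p _ _ => norm_nonneg _)
  have hmain : (S.card : ℝ) * ‖chat - cstar‖ ≤ (2 + α * ε) * Cost Xs cstar := by
    nlinarith
  have hw : 0 < (1 - 2 * α) * (Xt.card : ℝ) := by nlinarith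
  rw [le_div_iff₀ hw, mul_comm]
  have h3 : (1 - 2 * α) * (Xt.card : ℝ) * ‖chat - cstar‖ ≤ (S.card : ℝ) * ‖chat - cstar‖ :=
    mul_le_mul_of_nonneg_right hScard (norm_nonneg _)
  linarith only [hmain, h3]
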